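/- Under the same assumptions, N*(τ) → +∞ as τ → 0+ and N*(τ) → 0 as τ → τ̂ (when τ̂ < ∞). -/

import Mathlib

open MeasureTheory Filter

/-- The state trajectory `z(t;ψ,u) = T_t ψ + ∫_0^t T_{t-σ} B u(σ) dσ`. -/
noncomputable def traj {X U : Type*} [NormedAddCommGroup X] [NormedSpace ℝ X] [CompleteSpace X]
    [NormedAddCommGroup U] [NormedSpace ℝ U]
    (T : ℝ → X →L[ℝ] X) (B : U →L[ℝ] X) (ψ : X) (u : ℝ → U) (t : ℝ) : X :=
  T t ψ + ∫ σ in Set.Ioc 0 t, T (t - σ) (B (u σ))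

section stmt15aux

variable {X U : Type*} [NormedAddCommGroup X] [InnerProductSpace ℝ X] [CompleteSpace X]
  [NormedAddCommGroup U] [InnerProductSpace ℝ U] [CompleteSpace U]

lemma stmt15_apply_le (T : ℝ → X →L[ℝ] X) (hTcontr : ∀ t : ℝ, 0 ≤ t → ‖T t‖ ≤ 1)
    {t : ℝ} (ht : 0 ≤ t) (y : X) : ‖T t y‖ ≤ ‖y‖ := by
  calc ‖T t y‖ ≤ ‖T t‖ * ‖y‖ := (T t).le_opNorm y
    _ ≤ 1 * ‖y‖ := mul_le_mul_of_nonneg_right (hTcontr t ht) (norm_nonneg y)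
    _ = ‖y‖ := one_mul _

lemma stmt15_adj_apply_le (T : ℝ → X →L[ℝ] X) (hTcontr : ∀ t : ℝ, 0 ≤ t → ‖T t‖ ≤ 1)
    {t : ℝ} (ht : 0 ≤ t) (y : X) : ‖(T t).adjoint y‖ ≤ ‖y‖ := by
  calc ‖(T t).adjoint y‖ ≤ ‖(T t).adjoint‖ * ‖y‖ := ((T t).adjoint).le_opNorm y
    _ = ‖T t‖ * ‖y‖ := by rw [LinearIsometryEquiv.norm_map ContinuousLinearMap.adjoint (T t)]
    _ ≤ 1 * ‖y‖ := mul_le_mul_of_nonneg_right (hTcontr t ht) (norm_nonneg y)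
    _ = ‖y‖ := one_mul _

lemma stmt15_joint (T : ℝ → X →L[ℝ] X) (hTcont : ∀ x : X, Continuous fun t => T t x)
    (hTcontr : ∀ t : ℝ, 0 ≤ t → ‖T t‖ ≤ 1) :
    Continuous fun p : ℝ × X => T (max p.1 0) p.2 := by
  rw [continuous_iff_continuousAt]
  rintro ⟨t₀, x₀⟩
  have key : ∀ p : ℝ × X, ‖T (max p.1 0) p.2 - T (max t₀ 0) x₀‖ ≤
      ‖p.2 - x₀‖ + ‖T (max p.1 0) x₀ - T (max t₀ 0) x₀‖ := by
    intro p
    have hd : T (max p.1 0) p.2 - T (max t₀ 0) x₀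
        = T (max p.1 0) (p.2 - x₀) + (T (max p.1 0) x₀ - T (max t₀ 0) x₀) := by
      rw [map_sub]; abel
    rw [hd]
    refine (norm_add_le _ _).trans (add_le_add_left ?_ _)
    exact stmt15_apply_le T hTcontr (le_max_right _ _) _
  have h1 : Tendsto (fun p : ℝ × X => ‖p.2 - x₀‖) (nhds (t₀, x₀)) (nhds 0) := by
    have := ((continuous_snd.sub (continuous_const : Continuous fun _ : ℝ × X => x₀)).norm).tendsto (t₀, x₀)
    simpa using this
  have h2 : Tendsto (fun p : ℝ × X => ‖T (max p.1 0) x₀ - T (max t₀ 0) x₀‖)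
      (nhds (t₀, x₀)) (nhds 0) := by
    have hc : Continuous fun p : ℝ × X => T (max p.1 0) x₀ :=
      (hTcont x₀).comp (continuous_fst.max continuous_const)
    have := ((hc.sub (continuous_const : Continuous fun _ : ℝ × X => T (max t₀ 0) x₀)).norm).tendsto (t₀, x₀)
    simpa using this
  have hb : Tendsto (fun p : ℝ × X => ‖p.2 - x₀‖ + ‖T (max p.1 0) x₀ - T (max t₀ 0) x₀‖)
      (nhds (t₀, x₀)) (nhds 0) := by simpa using h1.add h2
  exact tendsto_iff_norm_sub_tendsto_zero.mpr
    (squeeze_zero (fun p => norm_nonneg _) key hb)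

set_option maxHeartbeats 1000000 in
lemma stmt15_adj_cont (T : ℝ → X →L[ℝ] X) (hT0 : T 0 = 1)
    (hTadd : ∀ s t : ℝ, 0 ≤ s → 0 ≤ t → T (s + t) = (T s).comp (T t))
    (hTcont : ∀ x : X, Continuous fun t => T t x)
    (hTcontr : ∀ t : ℝ, 0 ≤ t → ‖T t‖ ≤ 1) (η : X) :
    ContinuousOn (fun t => (T t).adjoint η) (Set.Ici 0) := by
  have blim : ∀ y : X, Tendsto (fun h : ℝ => ‖(T h).adjoint y - y‖)
      (nhdsWithin 0 (Set.Ici 0)) (nhds 0) := by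
    intro y
    have hbd : ∀ h ∈ Set.Ici (0:ℝ), ‖(T h).adjoint y - y‖ ≤
        Real.sqrt (2*‖y‖^2 - 2*(inner ℝ y (T h y) : ℝ)) := by
      intro h hh
      have h1 : ‖(T h).adjoint y - y‖^2 ≤ 2*‖y‖^2 - 2*(inner ℝ y (T h y) : ℝ) := by
        have e1 : ‖(T h).adjoint y - y‖^2
            = ‖(T h).adjoint y‖^2 - 2*(inner ℝ ((T h).adjoint y) y : ℝ) + ‖y‖^2 :=
          norm_sub_sq_real _ _
        have e2 : (inner ℝ ((T h).adjoint y) y : ℝ) = inner ℝ y (T h y) :=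
          ContinuousLinearMap.adjoint_inner_left (T h) y y
        have e3 : ‖(T h).adjoint y‖^2 ≤ ‖y‖^2 :=
          pow_le_pow_left₀ (norm_nonneg _) (stmt15_adj_apply_le T hTcontr hh y) 2
        rw [e1, e2]; linarith
      calc ‖(T h).adjoint y - y‖ = Real.sqrt (‖(T h).adjoint y - y‖^2) :=
            (Real.sqrt_sq (norm_nonneg _)).symm
        _ ≤ _ := Real.sqrt_le_sqrt h1
    have hcont : Tendsto (fun h : ℝ => Real.sqrt (2*‖y‖^2 - 2*(inner ℝ y (T h y) : ℝ)))
        (nhdsWithin 0 (Set.Ici 0)) (nhds 0) := by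
      have hin : Continuous fun h : ℝ => (inner ℝ y (T h y) : ℝ) :=
        continuous_const.inner (hTcont y)
      have hc : Continuous fun h : ℝ => Real.sqrt (2*‖y‖^2 - 2*(inner ℝ y (T h y) : ℝ)) :=
        (continuous_const.sub (continuous_const.mul hin)).sqrt
      have hv : Real.sqrt (2*‖y‖^2 - 2*(inner ℝ y (T 0 y) : ℝ)) = 0 := by
        rw [hT0]
        simp [real_inner_self_eq_norm_sq]
      exact (hc.tendsto' 0 0 hv).mono_left nhdsWithin_le_nhds
    exact squeeze_zero' (eventually_nhdsWithin_of_forall fun h _ => norm_nonneg _)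
      (eventually_nhdsWithin_of_forall hbd) hcont
  intro t₀ ht₀
  have key : ∀ t ∈ Set.Ici (0:ℝ), ‖(T t).adjoint η - (T t₀).adjoint η‖ ≤
      ‖(T (|t - t₀|)).adjoint η - η‖ := by
    intro t ht
    rcases le_total t₀ t with hle | hle
    · have e : T t = (T (t - t₀)).comp (T t₀) := by
        have := hTadd (t - t₀) t₀ (by linarith) ht₀
        rwa [sub_add_cancel] at this
      have e2 : (T t).adjoint η = (T t₀).adjoint ((T (t - t₀)).adjoint η) := by
        rw [e, ContinuousLinearMap.adjoint_comp, ContinuousLinearMap.comp_apply]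
      rw [e2, abs_of_nonneg (by linarith : (0:ℝ) ≤ t - t₀)]
      calc ‖(T t₀).adjoint ((T (t - t₀)).adjoint η) - (T t₀).adjoint η‖
          = ‖(T t₀).adjoint ((T (t - t₀)).adjoint η - η)‖ := by rw [map_sub]
        _ ≤ ‖(T (t - t₀)).adjoint η - η‖ := stmt15_adj_apply_le T hTcontr ht₀ _
    · have e : T t₀ = (T (t₀ - t)).comp (T t) := by
        have := hTadd (t₀ - t) t (by linarith) ht
        rwa [sub_add_cancel] at this
      have e2 : (T t₀).adjoint η = (T t).adjoint ((T (t₀ - t)).adjoint η) := by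
        rw [e, ContinuousLinearMap.adjoint_comp, ContinuousLinearMap.comp_apply]
      rw [abs_of_nonpos (by linarith : t - t₀ ≤ (0:ℝ)), neg_sub, e2]
      calc ‖(T t).adjoint η - (T t).adjoint ((T (t₀ - t)).adjoint η)‖
          = ‖(T t).adjoint (η - (T (t₀ - t)).adjoint η)‖ := by rw [map_sub]
        _ ≤ ‖η - (T (t₀ - t)).adjoint η‖ := stmt15_adj_apply_le T hTcontr ht _
        _ = ‖(T (t₀ - t)).adjoint η - η‖ := norm_sub_rev _ _
  have habs : Tendsto (fun t : ℝ => |t - t₀|) (nhdsWithin t₀ (Set.Ici 0))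
      (nhdsWithin 0 (Set.Ici 0)) := by
    apply tendsto_nhdsWithin_of_tendsto_nhds_of_eventually_within
    · exact (((continuous_id.sub continuous_const).abs).tendsto' t₀ 0 (by simp)).mono_left
        nhdsWithin_le_nhds
    · exact Eventually.of_forall fun t => Set.mem_Ici.2 (abs_nonneg _)
  have hcomp : Tendsto (fun t : ℝ => ‖(T (|t - t₀|)).adjoint η - η‖)
      (nhdsWithin t₀ (Set.Ici 0)) (nhds 0) := (blim η).comp habs
  exact tendsto_iff_norm_sub_tendsto_zero.mpr
    (squeeze_zero' (Eventually.of_forall fun t => norm_nonneg _)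
      (eventually_nhdsWithin_of_forall key) hcomp)


lemma stmt15_integrable (T : ℝ → X →L[ℝ] X) (B : U →L[ℝ] X)
    (hTcont : ∀ x : X, Continuous fun t => T t x)
    (hTcontr : ∀ t : ℝ, 0 ≤ t → ‖T t‖ ≤ 1)
    (τ ε : ℝ) (f : ℝ → U)
    (hm : AEStronglyMeasurable f (volume.restrict (Set.Ioo 0 τ)))
    (hb : ∀ᵐ t ∂volume.restrict (Set.Ioo 0 τ), ‖f t‖ ≤ ε) :
    Integrable (fun σ => T (τ - σ) (B (f σ))) (volume.restrict (Set.Ioc 0 τ)) := by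
  have hrw : volume.restrict (Set.Ioo 0 τ) = volume.restrict (Set.Ioc 0 τ) :=
    Measure.restrict_congr_set Ioo_ae_eq_Ioc
  rw [hrw] at hm hb
  haveI : IsFiniteMeasure (volume.restrict (Set.Ioc 0 τ)) :=
    ⟨by simp [Measure.restrict_apply_univ, Real.volume_Ioc]⟩
  have hΦ := stmt15_joint T hTcont hTcontr
  have hasm : AEStronglyMeasurable (fun σ => T (max (τ - σ) 0) (B (f σ)))
      (volume.restrict (Set.Ioc 0 τ)) := by
    have h1 : AEStronglyMeasurable (fun σ : ℝ => ((τ - σ, B (f σ)) : ℝ × X))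
        (volume.restrict (Set.Ioc 0 τ)) :=
      ((continuous_const.sub continuous_id).aestronglyMeasurable).prodMk
        (B.continuous.comp_aestronglyMeasurable hm)
    exact hΦ.comp_aestronglyMeasurable h1
  have hae : (fun σ => T (max (τ - σ) 0) (B (f σ)))
      =ᵐ[volume.restrict (Set.Ioc 0 τ)] (fun σ => T (τ - σ) (B (f σ))) := by
    filter_upwards [ae_restrict_mem measurableSet_Ioc] with σ hσ
    rw [max_eq_left (by linarith [hσ.2] : (0:ℝ) ≤ τ - σ)]
  refine Integrable.mono' (integrable_const (‖B‖ * (max ε 0))) (hasm.congr hae) ?_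
  filter_upwards [hb, ae_restrict_mem measurableSet_Ioc] with σ h1 h2
  calc ‖T (τ - σ) (B (f σ))‖ ≤ ‖B (f σ)‖ :=
        stmt15_apply_le T hTcontr (by linarith [h2.2] : (0:ℝ) ≤ τ - σ) _
    _ ≤ ‖B‖ * ‖f σ‖ := B.le_opNorm _
    _ ≤ ‖B‖ * (max ε 0) := by
        apply mul_le_mul_of_nonneg_left _ (norm_nonneg B)
        exact le_max_of_le_left h1

set_option maxHeartbeats 1000000 in
lemma stmt15_reach (T : ℝ → X →L[ℝ] X) (B : U →L[ℝ] X)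
    (hT0 : T 0 = 1)
    (hTadd : ∀ s t : ℝ, 0 ≤ s → 0 ≤ t → T (s + t) = (T s).comp (T t))
    (hTcont : ∀ x : X, Continuous fun t => T t x)
    (hTcontr : ∀ t : ℝ, 0 ≤ t → ‖T t‖ ≤ 1)
    (τ : ℝ) (hτ : 0 < τ) (ε : ℝ) (hε : 0 < ε) (x : X)
    (hx : ∀ η : X, (inner ℝ η x : ℝ) ≤ ε * ∫ t in Set.Ioc 0 τ, ‖B.adjoint ((T t).adjoint η)‖)
    (δ : ℝ) (hδ : 0 < δ) :
    ∃ f : ℝ → U, AEStronglyMeasurable f (volume.restrict (Set.Ioo 0 τ)) ∧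
      (∀ᵐ t ∂volume.restrict (Set.Ioo 0 τ), ‖f t‖ ≤ ε) ∧
      ‖(∫ σ in Set.Ioc 0 τ, T (τ - σ) (B (f σ))) - x‖ < δ := by
  set R : Set X := {v | ∃ f : ℝ → U, AEStronglyMeasurable f (volume.restrict (Set.Ioo 0 τ)) ∧
      (∀ᵐ t ∂volume.restrict (Set.Ioo 0 τ), ‖f t‖ ≤ ε) ∧
      v = ∫ σ in Set.Ioc 0 τ, T (τ - σ) (B (f σ))} with hRdef
  suffices hmem : x ∈ closure R by
    obtain ⟨v, hvR, hvx⟩ := Metric.mem_closure_iff.mp hmem δ hδ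
    obtain ⟨f, hfm, hfb, rfl⟩ := hvR
    refine ⟨f, hfm, hfb, ?_⟩
    rwa [dist_eq_norm, norm_sub_rev] at hvx
  by_contra hnot
  have hconv : Convex ℝ R := by
    rintro v₁ ⟨f₁, hm₁, hb₁, rfl⟩ v₂ ⟨f₂, hm₂, hb₂, rfl⟩ a b ha hb hab
    refine ⟨fun σ => a • f₁ σ + b • f₂ σ, (hm₁.const_smul a).add (hm₂.const_smul b), ?_, ?_⟩
    · filter_upwards [hb₁, hb₂] with σ h1 h2
      calc ‖a • f₁ σ + b • f₂ σ‖ ≤ ‖a • f₁ σ‖ + ‖b • f₂ σ‖ := norm_add_le _ _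
        _ = a * ‖f₁ σ‖ + b * ‖f₂ σ‖ := by
            rw [norm_smul, norm_smul, Real.norm_of_nonneg ha, Real.norm_of_nonneg hb]
        _ ≤ a * ε + b * ε := add_le_add (mul_le_mul_of_nonneg_left h1 ha)
            (mul_le_mul_of_nonneg_left h2 hb)
        _ = ε := by rw [← add_mul, hab, one_mul]
    · have hi₁ := stmt15_integrable T B hTcont hTcontr τ ε f₁ hm₁ hb₁
      have hi₂ := stmt15_integrable T B hTcont hTcontr τ ε f₂ hm₂ hb₂
      have e1 : (fun σ => T (τ - σ) (B (a • f₁ σ + b • f₂ σ)))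
          = fun σ => a • T (τ - σ) (B (f₁ σ)) + b • T (τ - σ) (B (f₂ σ)) := by
        funext σ
        simp only [map_add, ContinuousLinearMap.map_smul]
      have ha1 : Integrable (fun σ => a • T (τ - σ) (B (f₁ σ)))
          (volume.restrict (Set.Ioc 0 τ)) := hi₁.smul a
      have hb1 : Integrable (fun σ => b • T (τ - σ) (B (f₂ σ)))
          (volume.restrict (Set.Ioc 0 τ)) := hi₂.smul b
      rw [e1, integral_add ha1 hb1, integral_smul, integral_smul]
  obtain ⟨ℓ, u, hu1, hu2⟩ := geometric_hahn_banach_closed_point hconv.closure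
    isClosed_closure hnot
  obtain ⟨η, hη⟩ := (InnerProductSpace.toDual ℝ X).surjective ℓ
  set g : ℝ → U := fun σ => B.adjoint ((T (τ - σ)).adjoint η) with hgdef
  have hgc : ContinuousOn g (Set.Icc 0 τ) := by
    have hS := stmt15_adj_cont T hT0 hTadd hTcont hTcontr η
    have hsub : ContinuousOn (fun σ : ℝ => (T (τ - σ)).adjoint η) (Set.Icc 0 τ) := by
      apply hS.comp ((continuous_const.sub continuous_id).continuousOn)
      intro σ hσ
      exact Set.mem_Ici.2 (by linarith [hσ.2] : (0:ℝ) ≤ τ - σ)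
    exact B.adjoint.continuous.comp_continuousOn hsub
  have hgm : AEStronglyMeasurable g (volume.restrict (Set.Ioc 0 τ)) :=
    (hgc.mono Set.Ioc_subset_Icc_self).aestronglyMeasurable measurableSet_Ioc
  set f : ℝ → U := fun σ => (ε * ‖g σ‖⁻¹) • g σ with hfdef
  have hfb : ∀ σ, ‖f σ‖ ≤ ε := by
    intro σ
    by_cases hz : g σ = 0
    · simp [hfdef, hz, hε.le]
    · have e : ‖f σ‖ = ε * (‖g σ‖⁻¹ * ‖g σ‖) := by
        rw [hfdef, norm_smul, Real.norm_of_nonneg (by positivity), mul_assoc]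
      rw [e, inv_mul_cancel₀ (norm_ne_zero_iff.2 hz), mul_one]
  have hfm : AEStronglyMeasurable f (volume.restrict (Set.Ioo 0 τ)) := by
    rw [Measure.restrict_congr_set Ioo_ae_eq_Ioc]
    have h1 : AEMeasurable (fun σ => ε * ‖g σ‖⁻¹) (volume.restrict (Set.Ioc 0 τ)) :=
      (hgm.norm.aemeasurable.inv).const_mul ε
    exact h1.aestronglyMeasurable.smul hgm
  have hfb' : ∀ᵐ t ∂volume.restrict (Set.Ioo 0 τ), ‖f t‖ ≤ ε :=
    Eventually.of_forall fun t => hfb t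
  have hint := stmt15_integrable T B hTcont hTcontr τ ε f hfm hfb'
  set v := ∫ σ in Set.Ioc 0 τ, T (τ - σ) (B (f σ)) with hvdef
  have hvR : v ∈ R := ⟨f, hfm, hfb', rfl⟩
  have hiv : (inner ℝ η v : ℝ) = ∫ σ in Set.Ioc 0 τ, (inner ℝ η (T (τ - σ) (B (f σ))) : ℝ) := by
    have := (ContinuousLinearMap.integral_comp_comm (innerSL ℝ η) hint).symm
    simpa [hvdef] using this
  have hptwise : ∀ σ : ℝ, (inner ℝ η (T (τ - σ) (B (f σ))) : ℝ) = ε * ‖g σ‖ := by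
    intro σ
    have e1 : (inner ℝ η (T (τ - σ) (B (f σ))) : ℝ)
        = inner ℝ ((T (τ - σ)).adjoint η) (B (f σ)) :=
      (ContinuousLinearMap.adjoint_inner_left (T (τ - σ)) (B (f σ)) η).symm
    have e2 : (inner ℝ ((T (τ - σ)).adjoint η) (B (f σ)) : ℝ) = inner ℝ (g σ) (f σ) :=
      (ContinuousLinearMap.adjoint_inner_left B (f σ) ((T (τ - σ)).adjoint η)).symm
    rw [e1, e2]
    by_cases hz : g σ = 0
    · simp [hfdef, hz]
    · have hgn : ‖g σ‖ ≠ 0 := norm_ne_zero_iff.2 hz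
      rw [hfdef]
      rw [real_inner_smul_right, real_inner_self_eq_norm_sq]
      field_simp
  have hIeq : (∫ σ in Set.Ioc 0 τ, ‖g σ‖)
      = ∫ t in Set.Ioc 0 τ, ‖B.adjoint ((T t).adjoint η)‖ := by
    rw [← intervalIntegral.integral_of_le hτ.le, ← intervalIntegral.integral_of_le hτ.le]
    have := intervalIntegral.integral_comp_sub_left (a := 0) (b := τ)
      (fun t => ‖B.adjoint ((T t).adjoint η)‖) τ
    simpa [hgdef] using this
  have hIv : (inner ℝ η v : ℝ) = ε * ∫ t in Set.Ioc 0 τ, ‖B.adjoint ((T t).adjoint η)‖ := by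
    rw [hiv]
    simp_rw [hptwise]
    simp_rw [← smul_eq_mul]
    rw [integral_smul, hIeq, smul_eq_mul]
  have hlv : ℓ v < u := hu1 v (subset_closure hvR)
  have hxv : ℓ x ≤ ℓ v := by
    rw [← hη, InnerProductSpace.toDual_apply_apply, InnerProductSpace.toDual_apply_apply, hIv]
    exact hx η
  linarith

end stmt15aux

set_option maxHeartbeats 1000000 in
/-- Under the same assumptions, `N*(τ) → +∞` as `τ → 0+`, and
`N*(τ) → 0` as `τ → τ̂` when `τ̂ < ∞`, where `τ̂ = min {t ≥ 0 : ‖T_t ψ‖ ≤ r}`. -/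
theorem stmt15 {X U : Type*} [NormedAddCommGroup X] [InnerProductSpace ℝ X] [CompleteSpace X]
    [NormedAddCommGroup U] [InnerProductSpace ℝ U] [CompleteSpace U]
    (T : ℝ → X →L[ℝ] X) (B : U →L[ℝ] X)
    -- `T` is a `C₀`-semigroup of contractions (generated by `-A`)
    (hT0 : T 0 = 1)
    (hTadd : ∀ s t : ℝ, 0 ≤ s → 0 ≤ t → T (s + t) = (T s).comp (T t))
    (hTcont : ∀ x : X, Continuous fun t => T t x)
    (hTcontr : ∀ t : ℝ, 0 ≤ t → ‖T t‖ ≤ 1)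
    -- the `L¹` observability inequality `K(τ) ∫_0^τ ‖B*T*_t η‖ dt ≥ ‖T*_τ η‖`
    (K : ℝ → ℝ) (hK_pos : ∀ τ : ℝ, 0 < τ → 0 < K τ) (hK_cont : ContinuousOn K (Set.Ioi 0))
    (hobs : ∀ τ : ℝ, 0 < τ → ∀ η : X,
      ‖(T τ).adjoint η‖ ≤ K τ * ∫ t in Set.Ioc 0 τ, ‖B.adjoint ((T t).adjoint η)‖)
    (r : ℝ) (hr : 0 < r) (ψ : X) (hψ : ψ ∉ Metric.closedBall (0 : X) r)
    -- `N*(τ)` is the minimal `L^∞`-norm of controls steering `ψ` into `B(0,r)` at time `τ`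
    (Nstar : ℝ → ℝ)
    (hNstar : ∀ τ : ℝ, 0 < τ → IsLeast {C : ℝ | 0 ≤ C ∧ ∃ f : ℝ → U,
      AEStronglyMeasurable f (volume.restrict (Set.Ioo 0 τ)) ∧
      (∀ᵐ t ∂volume.restrict (Set.Ioo 0 τ), ‖f t‖ ≤ C) ∧
      traj T B ψ f τ ∈ Metric.closedBall (0 : X) r} (Nstar τ))
    -- `τ̂ < ∞`: the first time `‖T_t ψ‖ ≤ r` exists
    (τhat : ℝ) (hτhat : IsLeast {t : ℝ | 0 ≤ t ∧ ‖T t ψ‖ ≤ r} τhat) :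
    Tendsto Nstar (nhdsWithin 0 (Set.Ioi 0)) atTop ∧
      Tendsto Nstar (nhdsWithin τhat (Set.Iio τhat)) (nhds 0) := by
  have hψn : r < ‖ψ‖ := by
    rw [Metric.mem_closedBall, dist_zero_right] at hψ
    exact not_le.1 hψ
  have hτpos : 0 < τhat := by
    rcases lt_or_eq_of_le hτhat.1.1 with h | h
    · exact h
    · exfalso
      have h2 := hτhat.1.2
      rw [← h, hT0] at h2
      simp only [ContinuousLinearMap.one_apply] at h2
      linarith
  have hlt : ∀ t : ℝ, 0 ≤ t → t < τhat → r < ‖T t ψ‖ := by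
    intro t ht htlt
    by_contra hc
    exact absurd (hτhat.2 ⟨ht, not_lt.1 hc⟩) (not_le.2 htlt)
  have hmemNstar : ∀ τ : ℝ, 0 < τ → ∃ f : ℝ → U,
      AEStronglyMeasurable f (volume.restrict (Set.Ioo 0 τ)) ∧
      (∀ᵐ t ∂volume.restrict (Set.Ioo 0 τ), ‖f t‖ ≤ Nstar τ) ∧
      ‖traj T B ψ f τ‖ ≤ r ∧ 0 ≤ Nstar τ := by
    intro τ hτ
    obtain ⟨⟨h0, f, hm, hb, htr⟩, -⟩ := hNstar τ hτ
    rw [Metric.mem_closedBall, dist_zero_right] at htr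
    exact ⟨f, hm, hb, htr, h0⟩
  have hBne : B ≠ 0 := by
    intro hB0
    obtain ⟨f, hm, hb, htr, h0⟩ := hmemNstar (τhat/2) (by linarith)
    have he : traj T B ψ f (τhat/2) = T (τhat/2) ψ := by
      rw [traj, hB0]
      simp
    rw [he] at htr
    exact absurd htr (not_le.2 (hlt (τhat/2) (by linarith) (by linarith)))
  have hBpos : 0 < ‖B‖ := norm_pos_iff.2 hBne
  have hlow : ∀ τ : ℝ, 0 < τ → ‖T τ ψ‖ - r ≤ ‖B‖ * Nstar τ * τ := by
    intro τ hτ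
    obtain ⟨f, hm, hb, htr, h0⟩ := hmemNstar τ hτ
    have hbd : ∀ᵐ σ ∂volume.restrict (Set.Ioc 0 τ), ‖T (τ - σ) (B (f σ))‖ ≤ ‖B‖ * Nstar τ := by
      rw [← Measure.restrict_congr_set Ioo_ae_eq_Ioc]
      filter_upwards [hb, ae_restrict_mem measurableSet_Ioo] with σ h1 h2
      calc ‖T (τ - σ) (B (f σ))‖ ≤ ‖B (f σ)‖ :=
            stmt15_apply_le T hTcontr (by linarith [h2.2] : (0:ℝ) ≤ τ - σ) _
        _ ≤ ‖B‖ * ‖f σ‖ := B.le_opNorm _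
        _ ≤ ‖B‖ * Nstar τ := mul_le_mul_of_nonneg_left h1 (norm_nonneg B)
    haveI : IsFiniteMeasure (volume.restrict (Set.Ioc 0 τ)) :=
      ⟨by simp [Measure.restrict_apply_univ, Real.volume_Ioc]⟩
    have hnorm := norm_integral_le_of_norm_le_const hbd
    have hμ : ((volume.restrict (Set.Ioc 0 τ)) Set.univ).toReal = τ := by
      rw [Measure.restrict_apply_univ, Real.volume_Ioc]
      simp [ENNReal.toReal_ofReal hτ.le]
    rw [measureReal_def, hμ] at hnorm
    have h1 : ‖T τ ψ‖ ≤ ‖traj T B ψ f τ‖ + ‖∫ σ in Set.Ioc 0 τ, T (τ - σ) (B (f σ))‖ := by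
      have he : T τ ψ = traj T B ψ f τ - ∫ σ in Set.Ioc 0 τ, T (τ - σ) (B (f σ)) := by
        rw [traj]; abel
      rw [he]
      exact norm_sub_le _ _
    linarith [h1, htr, hnorm]
  constructor
  · -- N*(τ) → ∞ as τ → 0⁺
    have hdiv : Tendsto (fun τ => (‖T τ ψ‖ - r) * (‖B‖ * τ)⁻¹)
        (nhdsWithin 0 (Set.Ioi 0)) atTop := by
      apply Tendsto.pos_mul_atTop (sub_pos.2 hψn)
      · have h1 : Tendsto (fun τ : ℝ => ‖T τ ψ‖ - r) (nhds 0) (nhds (‖ψ‖ - r)) := by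
          apply ((hTcont ψ).norm.sub continuous_const).tendsto' 0 (‖ψ‖ - r)
          simp only [Pi.sub_apply, hT0]
          simp
        exact h1.mono_left nhdsWithin_le_nhds
      · have h1 : Tendsto (fun τ : ℝ => ‖B‖ * τ) (nhdsWithin 0 (Set.Ioi 0))
            (nhdsWithin 0 (Set.Ioi 0)) := by
          apply tendsto_nhdsWithin_of_tendsto_nhds_of_eventually_within
          · exact ((continuous_const.mul continuous_id).tendsto' 0 0 (by simp)).mono_left
              nhdsWithin_le_nhds
          · exact eventually_nhdsWithin_of_forall fun τ hτ => Set.mem_Ioi.2 (mul_pos hBpos hτ)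
        exact tendsto_inv_nhdsGT_zero.comp h1
    apply tendsto_atTop_mono' _ _ hdiv
    filter_upwards [self_mem_nhdsWithin] with τ hτ
    have hτ' : (0:ℝ) < τ := hτ
    have hpos : 0 < ‖B‖ * τ := mul_pos hBpos hτ'
    rw [← div_eq_mul_inv, div_le_iff₀ hpos]
    calc ‖T τ ψ‖ - r ≤ ‖B‖ * Nstar τ * τ := hlow τ hτ'
      _ = Nstar τ * (‖B‖ * τ) := by ring
  · -- N*(τ) → 0 as τ → τ̂⁻
    rw [tendsto_order]
    constructor
    · intro a ha
      filter_upwards [Ioo_mem_nhdsLT_of_mem (⟨hτpos, le_refl τhat⟩ : τhat ∈ Set.Ioc 0 τhat)]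
        with τ hτ
      exact lt_of_lt_of_le ha (hNstar τ hτ.1).1.1
    · intro ε hε
      set K₀ := K τhat with hK₀def
      have hK₀ : 0 < K₀ := hK_pos τhat hτpos
      have hle : nhdsWithin τhat (Set.Iio τhat) ≤ nhdsWithin τhat (Set.Ioi 0) := by
        rw [← nhdsWithin_inter_of_mem (mem_nhdsWithin_of_mem_nhds (Ioi_mem_nhds hτpos))]
        exact nhdsWithin_mono _ Set.inter_subset_left
      have hKev : ∀ᶠ τ in nhdsWithin τhat (Set.Iio τhat), K τ < 2 * K₀ := by
        have h2 : Tendsto K (nhdsWithin τhat (Set.Ioi 0)) (nhds K₀) :=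
          hK_cont τhat hτpos
        exact (h2.mono_left hle).eventually_lt_const (by linarith)
      set θ : ℝ := min (ε / (4 * K₀ * ‖ψ‖)) (1/2) with hθdef
      have hψpos : 0 < ‖ψ‖ := lt_trans hr hψn
      have hθpos : 0 < θ := lt_min (by positivity) (by norm_num)
      have hθhalf : θ ≤ 1/2 := min_le_right _ _
      have hθψ : θ * ‖ψ‖ ≤ ε / (4 * K₀) := by
        have h1 : θ ≤ ε / (4 * K₀ * ‖ψ‖) := min_le_left _ _
        calc θ * ‖ψ‖ ≤ (ε / (4 * K₀ * ‖ψ‖)) * ‖ψ‖ :=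
              mul_le_mul_of_nonneg_right h1 (norm_nonneg ψ)
          _ = ε / (4 * K₀) := by
              have hψ0 : ‖ψ‖ ≠ 0 := ne_of_gt hψpos
              have hK0' : K₀ ≠ 0 := ne_of_gt hK₀
              field_simp
      have hTev : ∀ᶠ τ in nhdsWithin τhat (Set.Iio τhat), ‖T τ ψ‖ < r * (1 + θ/2) := by
        have hc : Tendsto (fun τ => ‖T τ ψ‖) (nhds τhat) (nhds ‖T τhat ψ‖) :=
          ((hTcont ψ).norm).tendsto τhat
        apply (hc.mono_left nhdsWithin_le_nhds).eventually_lt_const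
        have h1 : ‖T τhat ψ‖ ≤ r := hτhat.1.2
        nlinarith
      filter_upwards [hKev, hTev,
        Ioo_mem_nhdsLT_of_mem (⟨hτpos, le_refl τhat⟩ : τhat ∈ Set.Ioc 0 τhat)]
        with τ hK2 hTb hτIoo
      have hτpos' : 0 < τ := hτIoo.1
      have hKτ : 0 < K τ := hK_pos τ hτpos'
      have hx : ∀ η : X, (inner ℝ η (-(θ • T τ ψ)) : ℝ) ≤
          (ε/2) * ∫ t in Set.Ioc 0 τ, ‖B.adjoint ((T t).adjoint η)‖ := by
        intro η
        have hIpos : 0 ≤ ∫ t in Set.Ioc 0 τ, ‖B.adjoint ((T t).adjoint η)‖ :=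
          integral_nonneg fun t => norm_nonneg _
        have e1 : (inner ℝ η (-(θ • T τ ψ)) : ℝ) = -(θ * inner ℝ η (T τ ψ)) := by
          rw [inner_neg_right, real_inner_smul_right]
        have e2 : (inner ℝ η (T τ ψ) : ℝ) = inner ℝ ((T τ).adjoint η) ψ :=
          (ContinuousLinearMap.adjoint_inner_left (T τ) ψ η).symm
        have e3 : -(θ * (inner ℝ η (T τ ψ) : ℝ)) ≤ θ * (‖(T τ).adjoint η‖ * ‖ψ‖) := by
          have habs := abs_real_inner_le_norm ((T τ).adjoint η) ψ
          have hneg := neg_abs_le (inner ℝ ((T τ).adjoint η) ψ : ℝ)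
          rw [e2]
          nlinarith [hθpos.le]
        have e4 := hobs τ hτpos' η
        calc (inner ℝ η (-(θ • T τ ψ)) : ℝ) = -(θ * inner ℝ η (T τ ψ)) := e1
          _ ≤ θ * (‖(T τ).adjoint η‖ * ‖ψ‖) := e3
          _ ≤ θ * ((K τ * ∫ t in Set.Ioc 0 τ, ‖B.adjoint ((T t).adjoint η)‖) * ‖ψ‖) := by
              apply mul_le_mul_of_nonneg_left _ hθpos.le
              exact mul_le_mul_of_nonneg_right e4 (norm_nonneg ψ)
          _ = (θ * ‖ψ‖ * K τ) * ∫ t in Set.Ioc 0 τ, ‖B.adjoint ((T t).adjoint η)‖ := by ring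
          _ ≤ (ε/2) * ∫ t in Set.Ioc 0 τ, ‖B.adjoint ((T t).adjoint η)‖ := by
              apply mul_le_mul_of_nonneg_right _ hIpos
              calc θ * ‖ψ‖ * K τ ≤ (ε / (4 * K₀)) * (2 * K₀) := by
                    apply mul_le_mul hθψ hK2.le hKτ.le (by positivity)
                _ = ε/2 := by field_simp; ring
      obtain ⟨f, hfm, hfb, hfc⟩ := stmt15_reach T B hT0 hTadd hTcont hTcontr τ hτpos'
        (ε/2) (by linarith) (-(θ • T τ ψ)) hx (θ*r/2) (by positivity)
      have htraj : traj T B ψ f τ ∈ Metric.closedBall (0:X) r := by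
        rw [Metric.mem_closedBall, dist_zero_right, traj]
        have hsplit : T τ ψ + (∫ σ in Set.Ioc 0 τ, T (τ - σ) (B (f σ)))
            = (1 - θ) • T τ ψ + ((∫ σ in Set.Ioc 0 τ, T (τ - σ) (B (f σ))) - (-(θ • T τ ψ))) := by
          rw [sub_smul, one_smul]
          abel
        rw [hsplit]
        have h2 : ‖(1 - θ) • T τ ψ‖ = (1 - θ) * ‖T τ ψ‖ := by
          rw [norm_smul, Real.norm_of_nonneg (by linarith : (0:ℝ) ≤ 1 - θ)]
        have h3 : (1 - θ) * ‖T τ ψ‖ + θ*r/2 ≤ r := by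
          have hm : (1 - θ) * ‖T τ ψ‖ ≤ (1 - θ) * (r * (1 + θ/2)) :=
            mul_le_mul_of_nonneg_left hTb.le (by linarith)
          nlinarith [hm, mul_nonneg hr.le (sq_nonneg θ)]
        calc ‖(1 - θ) • T τ ψ + ((∫ σ in Set.Ioc 0 τ, T (τ - σ) (B (f σ))) - (-(θ • T τ ψ)))‖
            ≤ ‖(1 - θ) • T τ ψ‖ + ‖(∫ σ in Set.Ioc 0 τ, T (τ - σ) (B (f σ))) - (-(θ • T τ ψ))‖ :=
              norm_add_le _ _
          _ ≤ (1 - θ) * ‖T τ ψ‖ + θ*r/2 := by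
              rw [h2]
              exact add_le_add_right hfc.le _
          _ ≤ r := h3
      have hNle : Nstar τ ≤ ε/2 := (hNstar τ hτpos').2 ⟨by linarith, f, hfm, hfb, htraj⟩
      linarith
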